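/- There is a universal constant c > 0 such that the following holds. Let ℓ ≥ 2, let ε > 0 satisfy ℓ ≤ e^ε, and let p, q be distributions on [ℓ]. Suppose τ > 0 satisfies Σ_{i : q_i > 0 and 1/2 ≤ p_i/q_i ≤ 2} (√q_i − √p_i)² ≥ τ. Then d_h²(RR^{ε,ℓ} p, RR^{ε,ℓ} q) ≥ c · min(1, e^ε·τ/ℓ) · τ. -/

import Mathlib

open scoped Classical ENNReal
open Finset

noncomputable section

/-- `p` is a probability distribution on `Fin k`. -/
def IsDist {k : ℕ} (p : Fin k → ℝ) : Prop :=
  (∀ i, 0 ≤ p i) ∧ ∑ i, p i = 1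

/-- `T` is a channel from `[k]` to `[ℓ]`: nonnegative entries, columns sum to 1. -/
def IsChannel {ℓ k : ℕ} (T : Matrix (Fin ℓ) (Fin k) ℝ) : Prop :=
  (∀ r c, 0 ≤ T r c) ∧ ∀ c, ∑ r, T r c = 1

/-- Squared Hellinger divergence `d_h²(p,q) = Σ_i (√p_i − √q_i)²`. -/
def hellingerSq {k : ℕ} (p q : Fin k → ℝ) : ℝ :=
  ∑ i, (Real.sqrt (p i) - Real.sqrt (q i)) ^ 2

/-- Total variation distance `d_TV(p,q) = (1/2) Σ_i |p_i − q_i|`. -/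
def tvDist {k : ℕ} (p q : Fin k → ℝ) : ℝ :=
  (1 / 2) * ∑ i, |p i - q i|

/-- `T` is an `ε`-LDP channel: `T(r,c) ≤ e^ε T(r,c')` for all rows `r`, columns `c, c'`. -/
def IsLDP {ℓ k : ℕ} (ε : ℝ) (T : Matrix (Fin ℓ) (Fin k) ℝ) : Prop :=
  IsChannel T ∧ ∀ r c c', T r c ≤ Real.exp ε * T r c'

/-- The `ℓ`-ary randomized response channel with privacy parameter `ε`. -/
def RRChannel (ε : ℝ) (ℓ : ℕ) : Matrix (Fin ℓ) (Fin ℓ) ℝ :=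
  fun j i => if j = i then Real.exp ε / ((ℓ : ℝ) - 1 + Real.exp ε)
             else 1 / ((ℓ : ℝ) - 1 + Real.exp ε)

lemma aux_lower (P Q B : ℝ) (hP : 0 ≤ P) (hQ : 0 ≤ Q) (hB : 0 < B)
    (h : (Real.sqrt P + Real.sqrt Q)^2 ≤ B) :
    (P - Q)^2 / B ≤ (Real.sqrt P - Real.sqrt Q)^2 := by
  rw [div_le_iff₀ hB]
  have h1 : (Real.sqrt P - Real.sqrt Q) * (Real.sqrt P + Real.sqrt Q) = P - Q := by
    nlinarith [Real.mul_self_sqrt hP, Real.mul_self_sqrt hQ]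
  calc (P - Q)^2 = (Real.sqrt P - Real.sqrt Q)^2 * (Real.sqrt P + Real.sqrt Q)^2 := by
        rw [← mul_pow, h1]
    _ ≤ (Real.sqrt P - Real.sqrt Q)^2 * B := mul_le_mul_of_nonneg_left h (sq_nonneg _)

lemma aux_upper (x y : ℝ) (hx : 0 ≤ x) (hy : 0 < y) :
    (Real.sqrt y - Real.sqrt x)^2 ≤ (y - x)^2 / y := by
  rw [le_div_iff₀ hy]
  nlinarith [Real.mul_self_sqrt hx, Real.mul_self_sqrt hy.le, Real.sqrt_nonneg x,
    Real.sqrt_nonneg y, sq_nonneg (Real.sqrt y - Real.sqrt x),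
    mul_nonneg (Real.sqrt_nonneg x) (Real.sqrt_nonneg y),
    sq_nonneg ((Real.sqrt y - Real.sqrt x) * Real.sqrt x)]

lemma aux_amgm (P Q : ℝ) (hP : 0 ≤ P) (hQ : 0 ≤ Q) :
    (Real.sqrt P + Real.sqrt Q)^2 ≤ 2 * (P + Q) := by
  nlinarith [Real.mul_self_sqrt hP, Real.mul_self_sqrt hQ,
    sq_nonneg (Real.sqrt P - Real.sqrt Q)]

lemma RR_apply {ℓ : ℕ} (ε : ℝ) (p : Fin ℓ → ℝ) (hp : ∑ i, p i = 1) (i : Fin ℓ) :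
    (RRChannel ε ℓ).mulVec p i
      = (1 + (Real.exp ε - 1) * p i) / ((ℓ : ℝ) - 1 + Real.exp ε) := by
  set D := (ℓ : ℝ) - 1 + Real.exp ε with hD
  have : (RRChannel ε ℓ).mulVec p i
      = ∑ j, ((1 / D) * p j + (if i = j then ((Real.exp ε - 1) / D) * p j else 0)) := by
    unfold Matrix.mulVec dotProduct RRChannel
    refine Finset.sum_congr rfl fun j _ => ?_
    by_cases h : i = j <;> simp [h, hD] <;> ring
  rw [this, Finset.sum_add_distrib, Finset.sum_ite_eq, if_pos (mem_univ i),
    ← Finset.mul_sum, hp]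
  ring

set_option maxHeartbeats 1000000 in
theorem stmt6 :
    ∃ c : ℝ, 0 < c ∧
      ∀ (ℓ : ℕ), 2 ≤ ℓ → ∀ ε : ℝ, 0 < ε → (ℓ : ℝ) ≤ Real.exp ε →
        ∀ p q : Fin ℓ → ℝ, IsDist p → IsDist q →
          ∀ τ : ℝ, 0 < τ →
            τ ≤ ∑ i ∈ Finset.univ.filter
                  (fun i => 0 < q i ∧ 1 / 2 ≤ p i / q i ∧ p i / q i ≤ 2),
                (Real.sqrt (q i) - Real.sqrt (p i)) ^ 2 →
            c * min 1 (Real.exp ε * τ / (ℓ : ℝ)) * τ ≤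
              hellingerSq ((RRChannel ε ℓ).mulVec p) ((RRChannel ε ℓ).mulVec q) := by
  refine ⟨1/320, by norm_num, ?_⟩
  intro ℓ hℓ ε hε hℓE p q hp hq τ hτ hτle
  set E := Real.exp ε with hE
  set D := (ℓ : ℝ) - 1 + E with hD
  have hℓ2 : (2 : ℝ) ≤ (ℓ : ℝ) := by exact_mod_cast hℓ
  have hE2 : (2 : ℝ) ≤ E := le_trans hℓ2 hℓE
  have hDpos : 0 < D := by simp only [hD]; linarith
  have hDleE : D ≤ 2 * E := by simp only [hD]; linarith
  have hDgeE : E ≤ D := by simp only [hD]; linarith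
  set a : ℝ := (E - 1) / D with ha
  have ha_pos : 0 < a := div_pos (by linarith) hDpos
  have ha_ge : 1/4 ≤ a := by
    rw [ha, le_div_iff₀ hDpos]; nlinarith
  have haD : a * D = E - 1 := by rw [ha]; exact div_mul_cancel₀ _ hDpos.ne'
  have ha2D : E / 8 ≤ a^2 * D := by
    have : a^2 * D = (E-1)^2 / D := by field_simp [ha]; linear_combination (a * D + E - 1) * haD
    rw [this, le_div_iff₀ hDpos]; nlinarith
  -- output distributions
  set P : Fin ℓ → ℝ := fun i => (1 + (E - 1) * p i) / D with hP
  set Q : Fin ℓ → ℝ := fun i => (1 + (E - 1) * q i) / D with hQ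
  have hPdef : ∀ i, (RRChannel ε ℓ).mulVec p i = P i := fun i => RR_apply ε p hp.2 i
  have hQdef : ∀ i, (RRChannel ε ℓ).mulVec q i = Q i := fun i => RR_apply ε q hq.2 i
  have hPnn : ∀ i, 0 ≤ P i := fun i =>
    div_nonneg (by nlinarith [hp.1 i]) hDpos.le
  have hQnn : ∀ i, 0 ≤ Q i := fun i =>
    div_nonneg (by nlinarith [hq.1 i]) hDpos.le
  set S : Finset (Fin ℓ) := Finset.univ.filter
      (fun i => 0 < q i ∧ 1 / 2 ≤ p i / q i ∧ p i / q i ≤ 2) with hS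
  -- facts on S
  have hSfact : ∀ i ∈ S, 0 < q i ∧ p i ≤ 2 * q i ∧ q i ≤ 2 * p i ∧ |p i - q i| ≤ q i := by
    intro i hi
    simp only [hS, mem_filter] at hi
    obtain ⟨-, hq0, h1, h2⟩ := hi
    have hple : p i ≤ 2 * q i := by rw [div_le_iff₀ hq0] at h2; linarith
    have hqle : q i ≤ 2 * p i := by
      rw [le_div_iff₀ hq0] at h1; linarith
    exact ⟨hq0, hple, hqle, abs_le.2 ⟨by linarith, by linarith⟩⟩
  -- split S
  set Sb : Finset (Fin ℓ) := S.filter (fun i => 1 / (a * D) ≤ q i) with hSb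
  set Ss : Finset (Fin ℓ) := S.filter (fun i => ¬ (1 / (a * D) ≤ q i)) with hSs
  have hsplit : ∑ i ∈ Sb, (Real.sqrt (q i) - Real.sqrt (p i))^2
      + ∑ i ∈ Ss, (Real.sqrt (q i) - Real.sqrt (p i))^2
      = ∑ i ∈ S, (Real.sqrt (q i) - Real.sqrt (p i))^2 :=
    Finset.sum_filter_add_sum_filter_not S _ _
  -- Hellinger sum bounded below by sum over any subset
  have hHell : ∀ T : Finset (Fin ℓ), ∑ i ∈ T, (Real.sqrt (P i) - Real.sqrt (Q i))^2
      ≤ hellingerSq ((RRChannel ε ℓ).mulVec p) ((RRChannel ε ℓ).mulVec q) := by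
    intro T
    unfold hellingerSq
    simp only [hPdef, hQdef]
    exact Finset.sum_le_sum_of_subset_of_nonneg (subset_univ T)
      (fun i _ _ => sq_nonneg _)
  have hPQdiff : ∀ i, P i - Q i = a * (p i - q i) := by
    intro i; simp only [hP, hQ, ha]; field_simp; ring
  have hPQsum : ∀ i, P i + Q i = 2 / D + a * (p i + q i) := by
    intro i; simp only [hP, hQ, ha]; field_simp; ring
  -- per-index bound on big part
  have hbig : ∀ i ∈ Sb, (a/10) * (Real.sqrt (q i) - Real.sqrt (p i))^2
      ≤ (Real.sqrt (P i) - Real.sqrt (Q i))^2 := by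
    intro i hi
    rw [hSb, mem_filter] at hi
    obtain ⟨hiS, hqbig⟩ := hi
    obtain ⟨hq0, hple, hqle, habs⟩ := hSfact i hiS
    have haq : 1 / D ≤ a * q i := by
      rw [div_le_iff₀ (mul_pos ha_pos hDpos)] at hqbig
      rw [div_le_iff₀ hDpos]
      nlinarith
    have hB : (Real.sqrt (P i) + Real.sqrt (Q i))^2 ≤ 10 * (a * q i) := by
      refine le_trans (aux_amgm _ _ (hPnn i) (hQnn i)) ?_
      rw [hPQsum i]
      have h5 : a * p i ≤ 2 * (a * q i) :=
        by nlinarith [mul_le_mul_of_nonneg_left hple ha_pos.le]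
      have expand : 2 * (2 / D + a * (p i + q i))
          = 4 * (1 / D) + 2 * (a * p i) + 2 * (a * q i) := by ring
      rw [expand]; linarith
    have hBpos : 0 < 10 * (a * q i) := by positivity
    have h1 := aux_lower (P i) (Q i) _ (hPnn i) (hQnn i) hBpos hB
    have h2 : (a/10) * (Real.sqrt (q i) - Real.sqrt (p i))^2
        ≤ (P i - Q i)^2 / (10 * (a * q i)) := by
      have h3 := aux_upper (p i) (q i) (hp.1 i) hq0
      rw [hPQdiff i]
      have : (a * (p i - q i))^2 / (10 * (a * q i)) = (a/10) * ((q i - p i)^2 / q i) := by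
        field_simp; ring
      rw [this]
      exact mul_le_mul_of_nonneg_left h3 (by positivity)
    linarith
  -- per-index bound on small part
  have hsmall : ∀ i ∈ Ss, (a^2 * D / 10) * (p i - q i)^2
      ≤ (Real.sqrt (P i) - Real.sqrt (Q i))^2 := by
    intro i hi
    rw [hSs, mem_filter] at hi
    obtain ⟨hiS, hqsm⟩ := hi
    push_neg at hqsm
    obtain ⟨hq0, hple, hqle, habs⟩ := hSfact i hiS
    have haq : a * q i ≤ 1 / D := by
      have h6 := (lt_div_iff₀ (mul_pos ha_pos hDpos)).1 hqsm
      rw [le_div_iff₀ hDpos]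
      nlinarith
    have hB : (Real.sqrt (P i) + Real.sqrt (Q i))^2 ≤ 10 / D := by
      refine le_trans (aux_amgm _ _ (hPnn i) (hQnn i)) ?_
      rw [hPQsum i]
      have h5 : a * p i ≤ 2 * (a * q i) :=
        by nlinarith [mul_le_mul_of_nonneg_left hple ha_pos.le]
      have expand : 2 * (2 / D + a * (p i + q i))
          = 4 * (1 / D) + 2 * (a * p i) + 2 * (a * q i) := by ring
      have h7 : 10 / D = 10 * (1 / D) := by ring
      rw [expand]; linarith
    have hBpos : 0 < 10 / D := by positivity
    have h1 := aux_lower (P i) (Q i) _ (hPnn i) (hQnn i) hBpos hB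
    rw [hPQdiff i] at h1
    have : (a * (p i - q i))^2 / (10 / D) = (a^2 * D / 10) * (p i - q i)^2 := by
      field_simp
    rw [this] at h1
    exact h1
  -- case split
  have hminle1 : min 1 (E * τ / (ℓ : ℝ)) ≤ 1 := min_le_left _ _
  have hminle2 : min 1 (E * τ / (ℓ : ℝ)) ≤ E * τ / (ℓ : ℝ) := min_le_right _ _
  by_cases hcase : τ / 2 ≤ ∑ i ∈ Sb, (Real.sqrt (q i) - Real.sqrt (p i))^2
  · -- big case
    have h1 : ∑ i ∈ Sb, (a/10) * (Real.sqrt (q i) - Real.sqrt (p i))^2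
        ≤ ∑ i ∈ Sb, (Real.sqrt (P i) - Real.sqrt (Q i))^2 :=
      Finset.sum_le_sum hbig
    rw [← Finset.mul_sum] at h1
    have h2 : (a/10) * (τ/2) ≤ (a/10) * ∑ i ∈ Sb, (Real.sqrt (q i) - Real.sqrt (p i))^2 :=
      mul_le_mul_of_nonneg_left hcase (by positivity)
    have h3 : τ / 80 ≤ (a/10) * (τ/2) := by nlinarith
    calc (1/320 : ℝ) * min 1 (E * τ / (ℓ : ℝ)) * τ ≤ (1/320) * 1 * τ :=
          mul_le_mul_of_nonneg_right
            (mul_le_mul_of_nonneg_left hminle1 (by norm_num)) hτ.le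
      _ ≤ τ / 80 := by linarith
      _ ≤ hellingerSq ((RRChannel ε ℓ).mulVec p) ((RRChannel ε ℓ).mulVec q) :=
          le_trans (le_trans h3 (le_trans h2 h1)) (hHell Sb)
  · -- small case
    push_neg at hcase
    have hSsum : τ / 2 ≤ ∑ i ∈ Ss, (Real.sqrt (q i) - Real.sqrt (p i))^2 := by
      linarith [hsplit, hτle]
    -- termwise: s_i ≤ |p i - q i|
    have hterm : ∀ i ∈ Ss, (Real.sqrt (q i) - Real.sqrt (p i))^2 ≤ |p i - q i| := by
      intro i hi
      rw [hSs, mem_filter] at hi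
      obtain ⟨hq0, hple, hqle, habs⟩ := hSfact i hi.1
      refine le_trans (aux_upper (p i) (q i) (hp.1 i) hq0) ?_
      rw [div_le_iff₀ hq0]
      calc (q i - p i)^2 = |p i - q i| * |p i - q i| := by
            rw [← sq, sq_abs]; ring
        _ ≤ |p i - q i| * q i := mul_le_mul_of_nonneg_left habs (abs_nonneg _)
    have habs_sum : τ / 2 ≤ ∑ i ∈ Ss, |p i - q i| :=
      le_trans hSsum (Finset.sum_le_sum hterm)
    -- Cauchy-Schwarz
    have hCS : (∑ i ∈ Ss, |p i - q i|)^2 ≤ (Ss.card : ℝ) * ∑ i ∈ Ss, (p i - q i)^2 := by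
      have := sq_sum_le_card_mul_sum_sq (s := Ss) (f := fun i => |p i - q i|)
      simpa [sq_abs] using this
    have hcard : (Ss.card : ℝ) ≤ (ℓ : ℝ) := by
      have : Ss.card ≤ (Finset.univ : Finset (Fin ℓ)).card := Finset.card_le_card (subset_univ _)
      simpa using (Nat.cast_le.2 this : (Ss.card : ℝ) ≤ _)
    have hℓpos : (0:ℝ) < (ℓ : ℝ) := by linarith
    have hsumsq : τ^2 / (4 * ℓ) ≤ ∑ i ∈ Ss, (p i - q i)^2 := by
      have h0 : (0:ℝ) ≤ ∑ i ∈ Ss, (p i - q i)^2 :=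
        Finset.sum_nonneg fun i _ => sq_nonneg _
      have h1 : (τ/2)^2 ≤ (∑ i ∈ Ss, |p i - q i|)^2 := by
        have : (0:ℝ) ≤ τ/2 := by linarith
        nlinarith [habs_sum]
      have h2 : (τ/2)^2 ≤ (ℓ : ℝ) * ∑ i ∈ Ss, (p i - q i)^2 := by
        refine le_trans h1 (le_trans hCS ?_)
        exact mul_le_mul_of_nonneg_right hcard h0
      rw [div_le_iff₀ (by positivity)]
      nlinarith
    have h1 : ∑ i ∈ Ss, (a^2 * D / 10) * (p i - q i)^2
        ≤ ∑ i ∈ Ss, (Real.sqrt (P i) - Real.sqrt (Q i))^2 :=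
      Finset.sum_le_sum hsmall
    rw [← Finset.mul_sum] at h1
    have h2 : (a^2 * D / 10) * (τ^2 / (4 * ℓ))
        ≤ (a^2 * D / 10) * ∑ i ∈ Ss, (p i - q i)^2 :=
      mul_le_mul_of_nonneg_left hsumsq (by positivity)
    have h3 : E * τ^2 / (320 * ℓ) ≤ (a^2 * D / 10) * (τ^2 / (4 * ℓ)) := by
      rw [div_le_iff₀ (by positivity)]
      have hτ2 : (0:ℝ) ≤ τ^2 := sq_nonneg _
      have := ha2D
      calc E * τ^2 = (E/8) * τ^2 * 8 := by ring
        _ ≤ (a^2*D) * τ^2 * 8 := by nlinarith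
        _ = a^2 * D / 10 * (τ^2 / (4*ℓ)) * (320 * ℓ) := by field_simp; ring
    calc (1/320 : ℝ) * min 1 (E * τ / (ℓ : ℝ)) * τ
        ≤ (1/320) * (E * τ / (ℓ : ℝ)) * τ :=
          mul_le_mul_of_nonneg_right
            (mul_le_mul_of_nonneg_left hminle2 (by norm_num)) hτ.le
      _ = E * τ^2 / (320 * ℓ) := by field_simp
      _ ≤ hellingerSq ((RRChannel ε ℓ).mulVec p) ((RRChannel ε ℓ).mulVec q) :=
          le_trans (le_trans h3 (le_trans h2 h1)) (hHell Ss)
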